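/- Let X = ℓ^p (1 ≤ p < ∞) or c₀ with coordinatewise multiplication, and λ ∈ ℂ with |λ| > 1. If x ∈ X is supercyclic for λB, then for every m ∈ ℕ the coordinatewise power x^m is also supercyclic for λB. -/

import Mathlib

open scoped ZeroAtInfty ENNReal Topology
open Filter
open scoped ZeroAtInfty ENNReal

/-- Lower density of a set of natural numbers. -/
noncomputable def lowerDensity (A : Set ℕ) : ℝ :=
  Filter.atTop.liminf fun N : ℕ => ((A ∩ Set.Iic N).ncard : ℝ) / (N + 1)

/-- A vector is hypercyclic for a map if its orbit is dense. -/
def Hypercyclic {X : Type*} [TopologicalSpace X] (T : X → X) (x : X) : Prop :=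
  Dense (Set.range fun n : ℕ => T^[n] x)

/-- A vector is frequently hypercyclic if it visits every nonempty open set along a set
of positive lower density. -/
def FreqHypercyclic {X : Type*} [TopologicalSpace X] (T : X → X) (x : X) : Prop :=
  ∀ U : Set X, IsOpen U → U.Nonempty → 0 < lowerDensity {n : ℕ | T^[n] x ∈ U}

/-- A vector is supercyclic for a map if the scalar multiples of its orbit are dense. -/
def Supercyclic {X : Type*} [TopologicalSpace X] [SMul ℂ X] (T : X → X) (x : X) : Prop :=
  Dense {y : X | ∃ (a : ℂ) (n : ℕ), y = a • T^[n] x}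
lemma pow_sub_pow_bound (M : ℝ) (hM : 0 ≤ M) (u v : ℂ) (hu : ‖u‖ ≤ M) (hv : ‖v‖ ≤ M)
    (m : ℕ) : ‖u ^ m - v ^ m‖ ≤ m * M ^ (m - 1) * ‖u - v‖ := by
  rcases Nat.eq_zero_or_pos m with rfl | hm
  · simp
  rw [← geom_sum₂_mul u v m, norm_mul]
  gcongr
  calc ‖∑ i ∈ Finset.range m, u ^ i * v ^ (m - 1 - i)‖
      ≤ ∑ i ∈ Finset.range m, ‖u ^ i * v ^ (m - 1 - i)‖ := norm_sum_le _ _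
    _ ≤ ∑ i ∈ Finset.range m, M ^ (m - 1) := by
        refine Finset.sum_le_sum fun i hi => ?_
        rw [norm_mul, norm_pow, norm_pow]
        have hile : i ≤ m - 1 := Nat.le_sub_one_of_lt (Finset.mem_range.mp hi)
        calc ‖u‖ ^ i * ‖v‖ ^ (m - 1 - i) ≤ M ^ i * M ^ (m - 1 - i) := by gcongr
          _ = M ^ (m - 1) := by rw [← pow_add, Nat.add_sub_cancel' hile]
    _ = m * M ^ (m - 1) := by simp [Finset.sum_const, mul_comm]

lemma key {X : Type*} [NormedAddCommGroup X] [Module ℂ X] (lam : ℂ)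
    (ι : X →ₗ[ℂ] (ℕ → ℂ))
    (hcoord : ∀ (f : X) (i : ℕ), ‖ι f i‖ ≤ ‖f‖)
    (hcomp : ∀ (f g : X) (C : ℝ), 0 ≤ C → (∀ i, ‖ι f i‖ ≤ C * ‖ι g i‖) → ‖f‖ ≤ C * ‖g‖)
    (hlift : ∀ g : ℕ → ℂ, {i | g i ≠ 0}.Finite → ∃ w : X, ι w = g)
    (hdense : ∀ (y : X), ∀ ε > 0, ∃ z : X, {i | ι z i ≠ 0}.Finite ∧ ‖y - z‖ < ε)
    (T : X → X) (hT : ∀ (f : X) (i : ℕ), ι (T f) i = lam * ι f (i + 1))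
    (x : X) (hx : Supercyclic T x) (m : ℕ) (hm : 1 ≤ m) (xm : X)
    (hxm : ∀ i : ℕ, ι xm i = ι x i ^ m) : Supercyclic T xm := by
  -- iterate formula
  have hiter : ∀ (f : X) (n i : ℕ), ι (T^[n] f) i = lam ^ n * ι f (i + n) := by
    intro f n
    induction n with
    | zero => simp
    | succ n ih =>
      intro i
      rw [Function.iterate_succ_apply', hT, ih, ← mul_assoc, ← pow_succ']
      ring_nf
  rw [Supercyclic, Metric.dense_iff]
  intro y ε hε
  -- dense finitely supported approximation
  obtain ⟨z, hzfin, hzy⟩ := hdense y (ε / 2) (by positivity)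
  -- m-th root of z
  have hroot : ∀ c : ℂ, ∃ b : ℂ, b ^ m = c := fun c =>
    IsAlgClosed.exists_pow_nat_eq c (by omega)
  set g : ℕ → ℂ := fun i => if ι z i = 0 then 0 else (hroot (ι z i)).choose with hg
  have hgfin : {i | g i ≠ 0}.Finite := by
    refine hzfin.subset fun i hi => ?_
    simp only [Set.mem_setOf_eq, hg] at hi ⊢
    intro h; exact hi (by simp [h])
  obtain ⟨w, hw⟩ := hlift g hgfin
  have hwpow : ∀ i, ι w i ^ m = ι z i := by
    intro i
    rw [hw]
    by_cases h : ι z i = 0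
    · simp [hg, h, zero_pow (by omega : m ≠ 0)]
    · simp only [hg, if_neg h]; exact (hroot (ι z i)).choose_spec
  -- choose δ
  set M : ℝ := ‖w‖ + 1 with hM
  set C : ℝ := m * M ^ (m - 1) with hC
  set δ : ℝ := min 1 (ε / (2 * (C + 1))) with hδ
  clear_value M C δ
  have hMpos : (0:ℝ) < M := by rw [hM]; positivity
  have hCpos : (0:ℝ) ≤ C := by rw [hC, hM]; positivity
  have hδpos : 0 < δ := by
    rw [hδ]
    refine lt_min one_pos (by positivity)
  -- supercyclicity of x at w
  obtain ⟨u, hu1, hu2⟩ := (Metric.dense_iff.mp hx) w δ hδpos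
  obtain ⟨b, n, rfl⟩ := hu2
  set u : X := b • T^[n] x with hu
  have hunorm : ‖u - w‖ < δ := by
    rw [← dist_eq_norm]
    exact Metric.mem_ball.mp hu1
  set a : ℂ := b ^ m * lam ^ ((m - 1) * n) with ha
  set s : X := a • T^[n] xm with hs
  have hui : ∀ i, ι u i = b * (lam ^ n * ι x (i + n)) := by
    intro i; rw [hu, map_smul]; simp [hiter]
  have hexp : (m - 1) * n + n = n * m := by
    calc (m - 1) * n + n = ((m - 1) + 1) * n := by ring
      _ = m * n := by rw [Nat.sub_add_cancel hm]
      _ = n * m := Nat.mul_comm _ _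
  have hsi : ∀ i, ι s i = (ι u i) ^ m := by
    intro i
    rw [hs, map_smul]
    simp only [Pi.smul_apply, smul_eq_mul, hiter, hxm, hui, ha, mul_pow, ← pow_mul]
    rw [← hexp, pow_add]
    ring
  -- norm bound
  have hubd : ∀ i, ‖ι u i‖ ≤ M := by
    intro i
    calc ‖ι u i‖ ≤ ‖u‖ := hcoord u i
      _ ≤ ‖w‖ + ‖u - w‖ := by
          have := norm_sub_norm_le u w
          linarith [norm_sub_norm_le u w]
      _ ≤ M := by
          have : δ ≤ 1 := hδ ▸ min_le_left _ _
          rw [hM]; linarith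
  have hwbd : ∀ i, ‖ι w i‖ ≤ M := fun i => (hcoord w i).trans (by rw [hM]; linarith)
  have hnorm : ‖s - z‖ ≤ C * ‖u - w‖ := by
    refine hcomp (s - z) (u - w) C hCpos fun i => ?_
    rw [map_sub, map_sub]
    simp only [Pi.sub_apply]
    rw [hsi, ← hwpow i]
    rw [hC]
    exact pow_sub_pow_bound M hMpos.le _ _ (hubd i) (hwbd i) m
  have hlt : ‖s - z‖ < ε / 2 := by
    have h1 : C * ‖u - w‖ ≤ C * δ := by
      apply mul_le_mul_of_nonneg_left hunorm.le hCpos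
    have h2 : C * δ ≤ C * (ε / (2 * (C + 1))) :=
      mul_le_mul_of_nonneg_left (hδ ▸ min_le_right _ _) hCpos
    have h3 : C * (ε / (2 * (C + 1))) < ε / 2 := by
      have hfrac : C / (C + 1) < 1 := by
        rw [div_lt_one (by positivity)]; linarith
      have hC1 : C + 1 ≠ 0 := by positivity
      calc C * (ε / (2 * (C + 1))) = ε / 2 * (C / (C + 1)) := by
            field_simp
        _ < ε / 2 * 1 := by exact mul_lt_mul_of_pos_left hfrac (by positivity)
        _ = ε / 2 := mul_one _
    linarith
  refine ⟨s, Metric.mem_ball.mpr ?_, ⟨a, n, rfl⟩⟩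
  rw [dist_eq_norm]
  calc ‖s - y‖ = ‖(s - z) - (y - z)‖ := by congr 1; abel
    _ ≤ ‖s - z‖ + ‖y - z‖ := norm_sub_le _ _
    _ < ε := by linarith

section LpSide

variable (p : ℝ≥0∞) [Fact (1 ≤ p)]

noncomputable def lpCoeL : lp (fun _ : ℕ => ℂ) p →ₗ[ℂ] (ℕ → ℂ) where
  toFun f := ⇑f
  map_add' f g := lp.coeFn_add f g
  map_smul' c f := lp.coeFn_smul c f

lemma hp0 : p ≠ 0 := by
  have h1 : (1:ℝ≥0∞) ≤ p := Fact.out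
  intro h; rw [h] at h1; simp at h1

lemma hptr (hp : p ≠ ⊤) : 0 < p.toReal :=
  ENNReal.toReal_pos (hp0 p) hp

lemma lp_coord (f : lp (fun _ : ℕ => ℂ) p) (i : ℕ) : ‖lpCoeL p f i‖ ≤ ‖f‖ :=
  lp.norm_apply_le_norm (hp0 p) f i

lemma lp_comp (hp : p ≠ ⊤) (f g : lp (fun _ : ℕ => ℂ) p) (C : ℝ) (hC : 0 ≤ C)
    (h : ∀ i, ‖lpCoeL p f i‖ ≤ C * ‖lpCoeL p g i‖) : ‖f‖ ≤ C * ‖g‖ := by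
  have ht := hptr p hp
  refine lp.norm_le_of_forall_sum_le ht (mul_nonneg hC (norm_nonneg _)) fun s => ?_
  calc ∑ i ∈ s, ‖f i‖ ^ p.toReal
      ≤ ∑ i ∈ s, (C * ‖g i‖) ^ p.toReal :=
        Finset.sum_le_sum fun i _ => Real.rpow_le_rpow (norm_nonneg _) (h i) ht.le
    _ = C ^ p.toReal * ∑ i ∈ s, ‖g i‖ ^ p.toReal := by
        simp_rw [Real.mul_rpow hC (norm_nonneg _)]
        rw [Finset.mul_sum]
    _ ≤ C ^ p.toReal * ‖g‖ ^ p.toReal := by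
        exact mul_le_mul_of_nonneg_left (lp.sum_rpow_le_norm_rpow ht g s)
          (Real.rpow_nonneg hC _)
    _ = (C * ‖g‖) ^ p.toReal := (Real.mul_rpow hC (norm_nonneg _)).symm

lemma lp_lift (g : ℕ → ℂ) (hg : {i | g i ≠ 0}.Finite) :
    ∃ w : lp (fun _ : ℕ => ℂ) p, lpCoeL p w = g := by
  have : Memℓp g p := (memℓp_zero hg).of_exponent_ge (zero_le : (0:ℝ≥0∞) ≤ p)
  exact ⟨⟨g, this⟩, rfl⟩

lemma lp_dense (hp : p ≠ ⊤) (y : lp (fun _ : ℕ => ℂ) p) (ε : ℝ) (hε : 0 < ε) :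
    ∃ z : lp (fun _ : ℕ => ℂ) p, {i | lpCoeL p z i ≠ 0}.Finite ∧ ‖y - z‖ < ε := by
  have hsum := lp.hasSum_single hp y
  have htend := Metric.tendsto_nhds.mp hsum ε hε
  obtain ⟨s, hs⟩ := htend.exists
  refine ⟨∑ i ∈ s, lp.single p i (y i), ?_, ?_⟩
  · refine s.finite_toSet.subset fun j hj => ?_
    by_contra hjs
    apply hj
    show (↑(∑ i ∈ s, lp.single p i (y i)) : ℕ → ℂ) j = 0
    rw [lp.coeFn_sum, Finset.sum_apply]
    refine Finset.sum_eq_zero fun i hi => ?_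
    exact lp.single_apply_ne p i _ (fun h => hjs (h ▸ hi))
  · rw [norm_sub_rev, ← dist_eq_norm]
    exact hs

end LpSide

section C0Side

noncomputable def c0CoeL : C₀(ℕ, ℂ) →ₗ[ℂ] (ℕ → ℂ) where
  toFun f := ⇑f
  map_add' f g := rfl
  map_smul' c f := rfl

lemma c0_coord (f : C₀(ℕ, ℂ)) (i : ℕ) : ‖c0CoeL f i‖ ≤ ‖f‖ := by
  rw [← ZeroAtInftyContinuousMap.norm_toBCF_eq_norm]
  exact f.toBCF.norm_coe_le_norm i

lemma c0_comp (f g : C₀(ℕ, ℂ)) (C : ℝ) (hC : 0 ≤ C)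
    (h : ∀ i, ‖c0CoeL f i‖ ≤ C * ‖c0CoeL g i‖) : ‖f‖ ≤ C * ‖g‖ := by
  rw [← ZeroAtInftyContinuousMap.norm_toBCF_eq_norm]
  refine (BoundedContinuousFunction.norm_le (mul_nonneg hC (norm_nonneg _))).mpr fun i => ?_
  exact (h i).trans (mul_le_mul_of_nonneg_left (c0_coord g i) hC)

lemma c0_lift (g : ℕ → ℂ) (hg : {i | g i ≠ 0}.Finite) :
    ∃ w : C₀(ℕ, ℂ), c0CoeL w = g := by
  have hten : Tendsto g (cocompact ℕ) (𝓝 0) := by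
    rw [cocompact_eq_cofinite]
    have hev : g =ᶠ[cofinite] fun _ => (0 : ℂ) := by
      rw [Filter.EventuallyEq, Filter.eventually_cofinite]
      simpa using hg
    exact (tendsto_congr' hev).mpr tendsto_const_nhds
  exact ⟨⟨⟨g, continuous_of_discreteTopology⟩, hten⟩, rfl⟩

lemma c0_dense (y : C₀(ℕ, ℂ)) (ε : ℝ) (hε : 0 < ε) :
    ∃ z : C₀(ℕ, ℂ), {i | c0CoeL z i ≠ 0}.Finite ∧ ‖y - z‖ < ε := by
  have h0 : Tendsto (⇑y) atTop (𝓝 0) := by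
    rw [← Nat.cofinite_eq_atTop, ← cocompact_eq_cofinite]
    exact ZeroAtInftyContinuousMapClass.zero_at_infty y
  obtain ⟨N, hN⟩ := (Metric.tendsto_atTop.mp h0) (ε / 2) (by positivity)
  set g : ℕ → ℂ := fun i => if i < N then y i else 0 with hgdef
  have hgfin : {i | g i ≠ 0}.Finite := by
    refine (Set.finite_Iio N).subset fun i hi => ?_
    simp only [Set.mem_setOf_eq, hgdef] at hi
    by_contra hiN
    exact hi (if_neg (by simpa using hiN))
  obtain ⟨z, hz⟩ := c0_lift g hgfin
  refine ⟨z, hz ▸ hgfin, ?_⟩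
  have hb : ‖y - z‖ ≤ ε / 2 := by
    rw [← ZeroAtInftyContinuousMap.norm_toBCF_eq_norm]
    refine (BoundedContinuousFunction.norm_le (by positivity)).mpr fun i => ?_
    have hzi : z i = g i := congrFun hz i
    show ‖(y - z) i‖ ≤ ε / 2
    rw [ZeroAtInftyContinuousMap.sub_apply, hzi]
    by_cases hiN : i < N
    · simp [hgdef, hiN]; positivity
    · have := hN i (by omega)
      rw [dist_zero_right] at this
      simp only [hgdef, if_neg hiN, sub_zero]
      exact this.le
  linarith

end C0Side

theorem stmt4 (p : ℝ≥0∞) [Fact (1 ≤ p)] (hp : p ≠ ⊤) (lam : ℂ) (hlam : 1 < ‖lam‖) :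
    (∀ T : lp (fun _ : ℕ => ℂ) p → lp (fun _ : ℕ => ℂ) p,
      (∀ (x : lp (fun _ : ℕ => ℂ) p) (i : ℕ), T x i = lam * x (i + 1)) →
      ∀ x : lp (fun _ : ℕ => ℂ) p, Supercyclic T x →
        ∀ m : ℕ, 1 ≤ m → ∀ xm : lp (fun _ : ℕ => ℂ) p,
          (∀ i : ℕ, xm i = x i ^ m) → Supercyclic T xm) ∧
    (∀ T : C₀(ℕ, ℂ) → C₀(ℕ, ℂ),
      (∀ (x : C₀(ℕ, ℂ)) (i : ℕ), T x i = lam * x (i + 1)) →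
      ∀ x : C₀(ℕ, ℂ), Supercyclic T x →
        ∀ m : ℕ, 1 ≤ m → ∀ xm : C₀(ℕ, ℂ),
          (∀ i : ℕ, xm i = x i ^ m) → Supercyclic T xm) := by

  constructor
  · intro T hT x hx m hm xm hxm
    exact key lam (lpCoeL p) (lp_coord p) (lp_comp p hp) (lp_lift p)
      (fun y ε hε => lp_dense p hp y ε hε) T hT x hx m hm xm hxm
  · intro T hT x hx m hm xm hxm
    exact key lam c0CoeL c0_coord c0_comp c0_lift
      (fun y ε hε => c0_dense y ε hε) T hT x hx m hm xm hxm
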